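/- arXiv:0809.0827 — 3 statements merged into one kernel-verified Lean document; each statement's English description precedes it below -/
import Mathlib

section
/- Let D be a real diagonal n×n matrix and A a Hermitian n×n matrix such that D - A is row diagonally dominant. Then there exist real numbers λ_i, μ_i and vectors v_i such that D = Σ_i μ_i v_i v_i^T, A = Σ_i λ_i v_i v_i^T, and μ_i ≥ λ_i for all i. -/
open Matrix Finset ComplexConjugate

private lemma keyA {n : ℕ} (i j p q : Fin n) (a : ℂ) :
    (((if i = j then (0:ℝ) else (4 * ‖a‖)⁻¹) : ℝ) : ℂ) *
      (((if p = i then (‖a‖ : ℂ) else 0) + (if p = j then conj a else 0)) *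
       conj ((if q = i then (‖a‖:ℂ) else 0) + (if q = j then conj a else 0)))
    + (((if i = j then (0:ℝ) else -(4 * ‖a‖)⁻¹) : ℝ) : ℂ) *
      (((if p = i then (‖a‖ : ℂ) else 0) + (if p = j then -conj a else 0)) *
       conj ((if q = i then (‖a‖:ℂ) else 0) + (if q = j then -conj a else 0)))
    = (if p = i ∧ q = j ∧ i ≠ j then a / 2 else 0)
      + (if p = j ∧ q = i ∧ i ≠ j then conj a / 2 else 0) := by
  rcases eq_or_ne a 0 with rfl | ha
  · simp
  · have habs : (‖a‖ : ℂ) ≠ 0 := by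
      simpa using ((norm_ne_zero_iff.mpr ha))
    have hcc : (starRingEnd ℂ) a * a = ((‖a‖ : ℂ))^2 := by
      rw [mul_comm, Complex.mul_conj, ← Complex.sq_norm]; push_cast; ring
    split_ifs <;> simp_all [hcc] <;>
      field_simp [show (‖a‖ : ℂ) ≠ 0 from by simpa using (norm_ne_zero_iff.mpr ha)] <;>
      ring

private lemma keyD {n : ℕ} (i j p q : Fin n) (a : ℂ) :
    (((if i = j then (0:ℝ) else (4 * ‖a‖)⁻¹) : ℝ) : ℂ) *
      (((if p = i then (‖a‖ : ℂ) else 0) + (if p = j then conj a else 0)) *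
       conj ((if q = i then (‖a‖:ℂ) else 0) + (if q = j then conj a else 0)))
    + (((if i = j then (0:ℝ) else (4 * ‖a‖)⁻¹) : ℝ) : ℂ) *
      (((if p = i then (‖a‖ : ℂ) else 0) + (if p = j then -conj a else 0)) *
       conj ((if q = i then (‖a‖:ℂ) else 0) + (if q = j then -conj a else 0)))
    = (if p = i ∧ q = i ∧ i ≠ j then (‖a‖ : ℂ) / 2 else 0)
      + (if p = j ∧ q = j ∧ i ≠ j then (‖a‖ : ℂ) / 2 else 0) := by
  rcases eq_or_ne a 0 with rfl | ha
  · simp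
  · have habs : (‖a‖ : ℂ) ≠ 0 := by
      simpa using ((norm_ne_zero_iff.mpr ha))
    have hcc : (starRingEnd ℂ) a * a = ((‖a‖ : ℂ))^2 := by
      rw [mul_comm, Complex.mul_conj, ← Complex.sq_norm]; push_cast; ring
    split_ifs <;> simp_all [hcc] <;>
      field_simp [show (‖a‖ : ℂ) ≠ 0 from by simpa using (norm_ne_zero_iff.mpr ha)] <;>
      ring

private lemma sum_pairA1 {n : ℕ} (p q : Fin n) (f : Fin n → Fin n → ℂ) :
    ∑ x : Fin n × Fin n, (if p = x.1 ∧ q = x.2 ∧ x.1 ≠ x.2 then f x.1 x.2 else 0)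
      = if p = q then 0 else f p q := by
  rw [Fintype.sum_prod_type]
  simp [ite_and, Finset.sum_ite_eq, Finset.sum_ite_eq', eq_comm]

private lemma sum_pairA2 {n : ℕ} (p q : Fin n) (f : Fin n → Fin n → ℂ) :
    ∑ x : Fin n × Fin n, (if p = x.2 ∧ q = x.1 ∧ x.1 ≠ x.2 then f x.1 x.2 else 0)
      = if p = q then 0 else f q p := by
  rw [Fintype.sum_prod_type]
  simp [ite_and, Finset.sum_ite_eq, Finset.sum_ite_eq', eq_comm]

private lemma sum_pairD1 {n : ℕ} (p q : Fin n) (f : Fin n → Fin n → ℂ) :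
    ∑ x : Fin n × Fin n, (if p = x.1 ∧ q = x.1 ∧ x.1 ≠ x.2 then f x.1 x.2 else 0)
      = if p = q then ∑ j ∈ Finset.univ.erase p, f p j else 0 := by
  have key : ∀ g : Fin n → ℂ, ∑ x, (if p = x then 0 else g x) = ∑ x ∈ Finset.univ.erase p, g x := by
    intro g
    rw [← Finset.sum_erase (s := Finset.univ) (a := p) (h := by simp)]
    exact Finset.sum_congr rfl fun x hx => by
      rw [if_neg fun h => (Finset.mem_erase.mp hx).1 h.symm]
  rw [Fintype.sum_prod_type]
  simp only [ite_and]
  simp [Finset.sum_ite_eq, Finset.sum_ite_eq', eq_comm, key]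

private lemma sum_pairD2 {n : ℕ} (p q : Fin n) (f : Fin n → Fin n → ℂ) :
    ∑ x : Fin n × Fin n, (if p = x.2 ∧ q = x.2 ∧ x.1 ≠ x.2 then f x.1 x.2 else 0)
      = if p = q then ∑ i ∈ Finset.univ.erase p, f i p else 0 := by
  have key : ∀ g : Fin n → ℂ, ∑ x, (if p = x then 0 else g x) = ∑ x ∈ Finset.univ.erase p, g x := by
    intro g
    rw [← Finset.sum_erase (s := Finset.univ) (a := p) (h := by simp)]
    exact Finset.sum_congr rfl fun x hx => by
      rw [if_neg fun h => (Finset.mem_erase.mp hx).1 h.symm]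
  rw [Fintype.sum_prod_type]
  simp only [ite_and]
  simp [Finset.sum_ite_eq, Finset.sum_ite_eq', eq_comm, key]

private lemma sum_single {n : ℕ} (p q : Fin n) (f : Fin n → ℂ) :
    ∑ i : Fin n, f i * ((if p = i then (1:ℂ) else 0) * conj (if q = i then (1:ℂ) else 0))
      = if p = q then f p else 0 := by
  rcases eq_or_ne p q with rfl | h
  · simp [apply_ite (starRingEnd ℂ), Finset.sum_ite_eq, Finset.sum_ite_eq']
  · simp [apply_ite (starRingEnd ℂ), Finset.sum_ite_eq, Finset.sum_ite_eq', h, mul_ite, ite_mul]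

/-- A complex matrix is row diagonally dominant: each diagonal entry is real and
dominates the sum of absolute values of the off-diagonal entries in its row. -/
def RowDiagDom {n : ℕ} (M : Matrix (Fin n) (Fin n) ℂ) : Prop :=
  ∀ i, (M i i).im = 0 ∧ ∑ j ∈ Finset.univ.erase i, ‖M i j‖ ≤ (M i i).re

/-- If D is real diagonal and A Hermitian with D - A row diagonally
dominant, then D and A admit a joint decomposition D = Σ μᵢ vᵢvᵢᴴ, A = Σ λᵢ vᵢvᵢᴴ
with μᵢ ≥ λᵢ. -/
theorem stmt_2 {n : ℕ} (D : Matrix (Fin n) (Fin n) ℝ) (hD : D.IsDiag)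
    (A : Matrix (Fin n) (Fin n) ℂ) (hA : A.IsHermitian)
    (hdd : RowDiagDom (D.map Complex.ofReal - A)) :
    ∃ (k : ℕ) (μ lam : Fin k → ℝ) (v : Fin k → (Fin n → ℂ)),
      D.map Complex.ofReal = ∑ i, (μ i : ℂ) • Matrix.vecMulVec (v i) (star (v i)) ∧
      A = ∑ i, (lam i : ℂ) • Matrix.vecMulVec (v i) (star (v i)) ∧
      ∀ i, lam i ≤ μ i := by
  classical
  have herm : ∀ i j, conj (A j i) = A i j := fun i j => by
    have := congrFun (congrFun hA i) j
    simpa [Matrix.conjTranspose_apply] using this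
  have absymm : ∀ i j, ‖A j i‖ = ‖A i j‖ := fun i j => by
    rw [← herm i j, Complex.norm_conj]
  -- the A identity
  have entryA : ∀ p q : Fin n,
      (∑ i : Fin n, (((A i i).re : ℝ) : ℂ) *
          ((if p = i then (1:ℂ) else 0) * conj (if q = i then (1:ℂ) else 0)))
      + ((∑ x : Fin n × Fin n,
            (((if x.1 = x.2 then (0:ℝ) else (4 * ‖A x.1 x.2‖)⁻¹) : ℝ) : ℂ) *
              (((if p = x.1 then (‖A x.1 x.2‖ : ℂ) else 0)
                  + (if p = x.2 then conj (A x.1 x.2) else 0)) *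
               conj ((if q = x.1 then (‖A x.1 x.2‖:ℂ) else 0)
                  + (if q = x.2 then conj (A x.1 x.2) else 0))))
        + (∑ x : Fin n × Fin n,
            (((if x.1 = x.2 then (0:ℝ) else -(4 * ‖A x.1 x.2‖)⁻¹) : ℝ) : ℂ) *
              (((if p = x.1 then (‖A x.1 x.2‖ : ℂ) else 0)
                  + (if p = x.2 then -conj (A x.1 x.2) else 0)) *
               conj ((if q = x.1 then (‖A x.1 x.2‖:ℂ) else 0)
                  + (if q = x.2 then -conj (A x.1 x.2) else 0)))))
      = A p q := by
    intro p q
    rw [sum_single p q (fun i => ((A i i).re : ℂ)), ← Finset.sum_add_distrib,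
      Finset.sum_congr rfl (fun (x : Fin n × Fin n) _ => keyA x.1 x.2 p q (A x.1 x.2)),
      Finset.sum_add_distrib, sum_pairA1 p q (fun i j => A i j / 2),
      sum_pairA2 p q (fun i j => conj (A i j) / 2)]
    rcases eq_or_ne p q with rfl | hpq
    · simp [Complex.conj_eq_iff_re.mp (herm p p)]
    · simp only [if_neg hpq]
      rw [herm p q]
      ring
  -- the D identity
  have entryD : ∀ p q : Fin n,
      (∑ i : Fin n, (((D i i - ∑ j ∈ Finset.univ.erase i, ‖A i j‖) : ℝ) : ℂ) *
          ((if p = i then (1:ℂ) else 0) * conj (if q = i then (1:ℂ) else 0)))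
      + ((∑ x : Fin n × Fin n,
            (((if x.1 = x.2 then (0:ℝ) else (4 * ‖A x.1 x.2‖)⁻¹) : ℝ) : ℂ) *
              (((if p = x.1 then (‖A x.1 x.2‖ : ℂ) else 0)
                  + (if p = x.2 then conj (A x.1 x.2) else 0)) *
               conj ((if q = x.1 then (‖A x.1 x.2‖:ℂ) else 0)
                  + (if q = x.2 then conj (A x.1 x.2) else 0))))
        + (∑ x : Fin n × Fin n,
            (((if x.1 = x.2 then (0:ℝ) else (4 * ‖A x.1 x.2‖)⁻¹) : ℝ) : ℂ) *
              (((if p = x.1 then (‖A x.1 x.2‖ : ℂ) else 0)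
                  + (if p = x.2 then -conj (A x.1 x.2) else 0)) *
               conj ((if q = x.1 then (‖A x.1 x.2‖:ℂ) else 0)
                  + (if q = x.2 then -conj (A x.1 x.2) else 0)))))
      = ((D p q : ℝ) : ℂ) := by
    intro p q
    rw [sum_single p q (fun i => (((D i i - ∑ j ∈ Finset.univ.erase i, ‖A i j‖) : ℝ) : ℂ)),
      ← Finset.sum_add_distrib,
      Finset.sum_congr rfl (fun (x : Fin n × Fin n) _ => keyD x.1 x.2 p q (A x.1 x.2)),
      Finset.sum_add_distrib, sum_pairD1 p q (fun i j => (‖A i j‖ : ℂ) / 2),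
      sum_pairD2 p q (fun i j => (‖A i j‖ : ℂ) / 2)]
    rcases eq_or_ne p q with rfl | hpq
    · simp only [eq_self_iff_true, if_true]
      have hswap : ∑ i ∈ Finset.univ.erase p, (‖A i p‖ : ℂ) / 2
          = ∑ j ∈ Finset.univ.erase p, (‖A p j‖ : ℂ) / 2 :=
        Finset.sum_congr rfl fun x _ => by rw [absymm]
      rw [hswap, ← Finset.sum_add_distrib]
      have hhalf : ∑ j ∈ Finset.univ.erase p,
          ((‖A p j‖ : ℂ) / 2 + (‖A p j‖ : ℂ) / 2)
          = ∑ j ∈ Finset.univ.erase p, (‖A p j‖ : ℂ) :=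
        Finset.sum_congr rfl fun x _ => by ring
      rw [hhalf]
      push_cast
      ring
    · have : D p q = 0 := hD hpq
      simp [hpq, this]
  have h1 : D.map Complex.ofReal = ∑ i : (Fin n ⊕ ((Fin n × Fin n) ⊕ (Fin n × Fin n))),
      (((Sum.elim
    (fun i => D i i - ∑ j ∈ Finset.univ.erase i, ‖A i j‖)
    (Sum.elim (fun x => if x.1 = x.2 then (0:ℝ) else (4 * ‖A x.1 x.2‖)⁻¹)
              (fun x => if x.1 = x.2 then (0:ℝ) else (4 * ‖A x.1 x.2‖)⁻¹))) i : ℝ) : ℂ) • Matrix.vecMulVec ((Sum.elim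
    (fun i => fun p => if p = i then (1:ℂ) else 0)
    (Sum.elim
      (fun x => fun p => (if p = x.1 then (‖A x.1 x.2‖ : ℂ) else 0)
                        + (if p = x.2 then conj (A x.1 x.2) else 0))
      (fun x => fun p => (if p = x.1 then (‖A x.1 x.2‖ : ℂ) else 0)
                        + (if p = x.2 then -conj (A x.1 x.2) else 0)))) i) (star ((Sum.elim
    (fun i => fun p => if p = i then (1:ℂ) else 0)
    (Sum.elim
      (fun x => fun p => (if p = x.1 then (‖A x.1 x.2‖ : ℂ) else 0)
                        + (if p = x.2 then conj (A x.1 x.2) else 0))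
      (fun x => fun p => (if p = x.1 then (‖A x.1 x.2‖ : ℂ) else 0)
                        + (if p = x.2 then -conj (A x.1 x.2) else 0)))) i)) := by
    rw [Fintype.sum_sum_type, Fintype.sum_sum_type]
    ext p q
    simp only [Matrix.add_apply, Matrix.sum_apply, Matrix.smul_apply, Matrix.vecMulVec_apply,
      Pi.star_apply, smul_eq_mul, Sum.elim_inl, Sum.elim_inr, Complex.star_def, Matrix.map_apply]
    exact (entryD p q).symm
  have h2 : A = ∑ i : (Fin n ⊕ ((Fin n × Fin n) ⊕ (Fin n × Fin n))),
      (((Sum.elim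
    (fun i => (A i i).re)
    (Sum.elim (fun x => if x.1 = x.2 then (0:ℝ) else (4 * ‖A x.1 x.2‖)⁻¹)
              (fun x => if x.1 = x.2 then (0:ℝ) else -(4 * ‖A x.1 x.2‖)⁻¹))) i : ℝ) : ℂ) • Matrix.vecMulVec ((Sum.elim
    (fun i => fun p => if p = i then (1:ℂ) else 0)
    (Sum.elim
      (fun x => fun p => (if p = x.1 then (‖A x.1 x.2‖ : ℂ) else 0)
                        + (if p = x.2 then conj (A x.1 x.2) else 0))
      (fun x => fun p => (if p = x.1 then (‖A x.1 x.2‖ : ℂ) else 0)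
                        + (if p = x.2 then -conj (A x.1 x.2) else 0)))) i) (star ((Sum.elim
    (fun i => fun p => if p = i then (1:ℂ) else 0)
    (Sum.elim
      (fun x => fun p => (if p = x.1 then (‖A x.1 x.2‖ : ℂ) else 0)
                        + (if p = x.2 then conj (A x.1 x.2) else 0))
      (fun x => fun p => (if p = x.1 then (‖A x.1 x.2‖ : ℂ) else 0)
                        + (if p = x.2 then -conj (A x.1 x.2) else 0)))) i)) := by
    rw [Fintype.sum_sum_type, Fintype.sum_sum_type]
    ext p q
    simp only [Matrix.add_apply, Matrix.sum_apply, Matrix.smul_apply, Matrix.vecMulVec_apply,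
      Pi.star_apply, smul_eq_mul, Sum.elim_inl, Sum.elim_inr, Complex.star_def, Matrix.map_apply]
    exact (entryA p q).symm
  have h3 : ∀ i : (Fin n ⊕ ((Fin n × Fin n) ⊕ (Fin n × Fin n))), (Sum.elim
    (fun i => (A i i).re)
    (Sum.elim (fun x => if x.1 = x.2 then (0:ℝ) else (4 * ‖A x.1 x.2‖)⁻¹)
              (fun x => if x.1 = x.2 then (0:ℝ) else -(4 * ‖A x.1 x.2‖)⁻¹))) i ≤ (Sum.elim
    (fun i => D i i - ∑ j ∈ Finset.univ.erase i, ‖A i j‖)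
    (Sum.elim (fun x => if x.1 = x.2 then (0:ℝ) else (4 * ‖A x.1 x.2‖)⁻¹)
              (fun x => if x.1 = x.2 then (0:ℝ) else (4 * ‖A x.1 x.2‖)⁻¹))) i := by
    rintro (i | x | x)
    · simp only [Sum.elim_inl]
      have h := (hdd i).2
      have hre : ((D.map Complex.ofReal - A) i i).re = D i i - (A i i).re := by
        simp [Matrix.sub_apply, Matrix.map_apply]
      have hsum : ∑ j ∈ Finset.univ.erase i, ‖(D.map Complex.ofReal - A) i j‖
          = ∑ j ∈ Finset.univ.erase i, ‖A i j‖ := by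
        refine Finset.sum_congr rfl fun j hj => ?_
        have hji : j ≠ i := (Finset.mem_erase.mp hj).1
        simp [Matrix.sub_apply, Matrix.map_apply, hD hji.symm]
      rw [hsum, hre] at h
      linarith
    · exact le_refl _
    · simp only [Sum.elim_inr, Sum.elim_inl]
      split_ifs with h
      · exact le_refl _
      · have h0 : (0:ℝ) ≤ (4 * ‖A x.1 x.2‖)⁻¹ := by positivity
        linarith
  refine ⟨Fintype.card (Fin n ⊕ ((Fin n × Fin n) ⊕ (Fin n × Fin n))),
    (Sum.elim
    (fun i => D i i - ∑ j ∈ Finset.univ.erase i, ‖A i j‖)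
    (Sum.elim (fun x => if x.1 = x.2 then (0:ℝ) else (4 * ‖A x.1 x.2‖)⁻¹)
              (fun x => if x.1 = x.2 then (0:ℝ) else (4 * ‖A x.1 x.2‖)⁻¹))) ∘ (Fintype.equivFin (Fin n ⊕ ((Fin n × Fin n) ⊕ (Fin n × Fin n)))).symm,
    (Sum.elim
    (fun i => (A i i).re)
    (Sum.elim (fun x => if x.1 = x.2 then (0:ℝ) else (4 * ‖A x.1 x.2‖)⁻¹)
              (fun x => if x.1 = x.2 then (0:ℝ) else -(4 * ‖A x.1 x.2‖)⁻¹))) ∘ (Fintype.equivFin (Fin n ⊕ ((Fin n × Fin n) ⊕ (Fin n × Fin n)))).symm,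
    (Sum.elim
    (fun i => fun p => if p = i then (1:ℂ) else 0)
    (Sum.elim
      (fun x => fun p => (if p = x.1 then (‖A x.1 x.2‖ : ℂ) else 0)
                        + (if p = x.2 then conj (A x.1 x.2) else 0))
      (fun x => fun p => (if p = x.1 then (‖A x.1 x.2‖ : ℂ) else 0)
                        + (if p = x.2 then -conj (A x.1 x.2) else 0)))) ∘ (Fintype.equivFin (Fin n ⊕ ((Fin n × Fin n) ⊕ (Fin n × Fin n)))).symm, ?_, ?_, fun i => h3 _⟩
  · rw [h1]
    exact (Equiv.sum_comp (Fintype.equivFin (Fin n ⊕ ((Fin n × Fin n) ⊕ (Fin n × Fin n)))).symm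
      (fun i => (((Sum.elim
    (fun i => D i i - ∑ j ∈ Finset.univ.erase i, ‖A i j‖)
    (Sum.elim (fun x => if x.1 = x.2 then (0:ℝ) else (4 * ‖A x.1 x.2‖)⁻¹)
              (fun x => if x.1 = x.2 then (0:ℝ) else (4 * ‖A x.1 x.2‖)⁻¹))) i : ℝ) : ℂ) • Matrix.vecMulVec ((Sum.elim
    (fun i => fun p => if p = i then (1:ℂ) else 0)
    (Sum.elim
      (fun x => fun p => (if p = x.1 then (‖A x.1 x.2‖ : ℂ) else 0)
                        + (if p = x.2 then conj (A x.1 x.2) else 0))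
      (fun x => fun p => (if p = x.1 then (‖A x.1 x.2‖ : ℂ) else 0)
                        + (if p = x.2 then -conj (A x.1 x.2) else 0)))) i) (star ((Sum.elim
    (fun i => fun p => if p = i then (1:ℂ) else 0)
    (Sum.elim
      (fun x => fun p => (if p = x.1 then (‖A x.1 x.2‖ : ℂ) else 0)
                        + (if p = x.2 then conj (A x.1 x.2) else 0))
      (fun x => fun p => (if p = x.1 then (‖A x.1 x.2‖ : ℂ) else 0)
                        + (if p = x.2 then -conj (A x.1 x.2) else 0)))) i)))).symm
  · conv_lhs => rw [h2]
    exact (Equiv.sum_comp (Fintype.equivFin (Fin n ⊕ ((Fin n × Fin n) ⊕ (Fin n × Fin n)))).symm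
      (fun i => (((Sum.elim
    (fun i => (A i i).re)
    (Sum.elim (fun x => if x.1 = x.2 then (0:ℝ) else (4 * ‖A x.1 x.2‖)⁻¹)
              (fun x => if x.1 = x.2 then (0:ℝ) else -(4 * ‖A x.1 x.2‖)⁻¹))) i : ℝ) : ℂ) • Matrix.vecMulVec ((Sum.elim
    (fun i => fun p => if p = i then (1:ℂ) else 0)
    (Sum.elim
      (fun x => fun p => (if p = x.1 then (‖A x.1 x.2‖ : ℂ) else 0)
                        + (if p = x.2 then conj (A x.1 x.2) else 0))
      (fun x => fun p => (if p = x.1 then (‖A x.1 x.2‖ : ℂ) else 0)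
                        + (if p = x.2 then -conj (A x.1 x.2) else 0)))) i) (star ((Sum.elim
    (fun i => fun p => if p = i then (1:ℂ) else 0)
    (Sum.elim
      (fun x => fun p => (if p = x.1 then (‖A x.1 x.2‖ : ℂ) else 0)
                        + (if p = x.2 then conj (A x.1 x.2) else 0))
      (fun x => fun p => (if p = x.1 then (‖A x.1 x.2‖ : ℂ) else 0)
                        + (if p = x.2 then -conj (A x.1 x.2) else 0)))) i)))).symm
end

section
/- Let G be a graph on vertex set V×W and G^{pT} its partial transpose graph. If the normalized Laplacian matrix of G is separable in C^{|V|} × C^{|W|}, then every vertex has the same degree in G as in G^{pT}. -/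
open Matrix Finset
open scoped Kronecker Classical ComplexOrder

/-- The partial transpose graph: {(u,v),(w,y)} is an edge iff {(u,y),(w,v)} is an
edge of the original graph. -/
def partialTranspose {α β : Type*} (G : SimpleGraph (α × β)) : SimpleGraph (α × β) where
  Adj x y := G.Adj (x.1, y.2) (y.1, x.2)
  symm := ⟨fun x y h => G.adj_symm h⟩
  loopless := ⟨fun x h => G.loopless.irrefl (x.1, x.2) h⟩

/-- The degree of a vertex: the number of neighbors. -/
noncomputable def natDeg {γ : Type*} [Fintype γ] (G : SimpleGraph γ) (x : γ) : ℕ :=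
  (Finset.univ.filter fun y => G.Adj x y).card

/-- The 0-1 adjacency matrix of a graph, over ℂ. -/
noncomputable def adjMatC {γ : Type*} [Fintype γ] (G : SimpleGraph γ) : Matrix γ γ ℂ :=
  Matrix.of fun u v => if G.Adj u v then 1 else 0

/-- The Laplacian matrix D - A of a graph. -/
noncomputable def lapMat {γ : Type*} [Fintype γ] [DecidableEq γ] (G : SimpleGraph γ) :
    Matrix γ γ ℂ :=
  Matrix.diagonal (fun x => ∑ y, adjMatC G x y) - adjMatC G

/-- A density matrix: Hermitian positive semidefinite with unit trace. -/
def IsDensityMatrix {γ : Type*} [Fintype γ] [DecidableEq γ] (M : Matrix γ γ ℂ) : Prop :=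
  M.PosSemidef ∧ M.trace = 1

/-- Bipartite separability of a matrix on ℂ^{|α|} ⊗ ℂ^{|β|}. -/
def SepDensity2 {α β : Type*} [Fintype α] [Fintype β] [DecidableEq α] [DecidableEq β]
    (A : Matrix (α × β) (α × β) ℂ) : Prop :=
  ∃ (k : ℕ) (c : Fin k → ℝ) (ρ : Fin k → Matrix α α ℂ) (σ : Fin k → Matrix β β ℂ),
    (∀ t, 0 ≤ c t) ∧ (∑ t, c t = 1) ∧
    (∀ t, IsDensityMatrix (ρ t) ∧ IsDensityMatrix (σ t)) ∧
    A = ∑ t, (c t : ℂ) • (ρ t ⊗ₖ σ t)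

lemma kron_conjT {m n : Type*} [Fintype m] [Fintype n]
    (A : Matrix m m ℂ) (B : Matrix n n ℂ) : (A ⊗ₖ B)ᴴ = Aᴴ ⊗ₖ Bᴴ := by
  ext ⟨a,b⟩ ⟨c,d⟩
  simp [Matrix.conjTranspose_apply, mul_comm]

lemma psd_kron {m n : Type*} [Fintype m] [Fintype n] [DecidableEq m] [DecidableEq n]
    {A : Matrix m m ℂ} {B : Matrix n n ℂ} (hA : A.PosSemidef) (hB : B.PosSemidef) :
    (A ⊗ₖ B).PosSemidef := by
  exact hA.kronecker hB

lemma psd_smul {m : Type*} [Fintype m] {A : Matrix m m ℂ} {c : ℝ} (hc : 0 ≤ c)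
    (hA : A.PosSemidef) : ((c:ℂ) • A).PosSemidef := by
  refine Matrix.PosSemidef.of_dotProduct_mulVec_nonneg ?_ fun x => ?_
  · have := hA.1
    unfold Matrix.IsHermitian at *
    rw [Matrix.conjTranspose_smul, this]
    congr 1
    simp [Complex.star_def, Complex.conj_ofReal]
  · rw [Matrix.smul_mulVec, dotProduct_smul, smul_eq_mul]
    exact mul_nonneg (by exact_mod_cast hc) (hA.dotProduct_mulVec_nonneg x)

lemma adj_row_sum {γ : Type*} [Fintype γ] (G : SimpleGraph γ) (p : γ) :
    ∑ q, adjMatC G p q = (natDeg G p : ℂ) := by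
  simp [adjMatC, natDeg, Finset.sum_boole]

lemma lap_row_sum {γ : Type*} [Fintype γ] [DecidableEq γ] (G : SimpleGraph γ) (p : γ) :
    ∑ q, lapMat G p q = 0 := by
  simp [lapMat, Matrix.sub_apply, Finset.sum_sub_distrib, Matrix.diagonal_apply,
    Finset.sum_ite_eq]

lemma lap_pt_row_sum {α β : Type*} [Fintype α] [Fintype β] [DecidableEq α] [DecidableEq β]
    (G : SimpleGraph (α × β)) (p : α × β) :
    ∑ q : α × β, lapMat G (q.1, p.2) (p.1, q.2)
      = (natDeg G p : ℂ) - (natDeg (partialTranspose G) p : ℂ) := by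
  simp only [lapMat, Matrix.sub_apply, Finset.sum_sub_distrib]
  congr 1
  · have h1 : ∀ q : α × β, Matrix.diagonal (fun x => ∑ y, adjMatC G x y) (q.1, p.2) (p.1, q.2)
        = if q = p then (natDeg G p : ℂ) else 0 := by
      intro q
      rcases q with ⟨a, b⟩; rcases p with ⟨u, v⟩
      by_cases h : (a, b) = (u, v)
      · obtain ⟨rfl, rfl⟩ := Prod.mk.injEq .. ▸ h
        simp only [if_pos rfl, Matrix.diagonal_apply_eq]
        exact adj_row_sum G (a, b)
      · rw [if_neg h]
        apply Matrix.diagonal_apply_ne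
        simp only [Prod.mk.injEq, ne_eq, not_and]
        intro hau hvb
        exact absurd (by simp [hau, hvb.symm] : (a,b) = (u,v)) h
    simp [h1]
  · have h2 : ∀ q : α × β, adjMatC G (q.1, p.2) (p.1, q.2)
        = adjMatC (partialTranspose G) p q := by
      intro q
      simp only [adjMatC, Matrix.of_apply, partialTranspose]
      rw [G.adj_comm]
      congr
    rw [Finset.sum_congr rfl fun q _ => h2 q, adj_row_sum]

/-- The partial-transpose reindexing involution on pairs of vertices. -/
def ptInvol (α β : Type*) : ((α × β) × (α × β)) ≃ ((α × β) × (α × β)) :=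
  Function.Involutive.toPerm (fun z => ((z.2.1, z.1.2), (z.1.1, z.2.2)))
    (by rintro ⟨⟨a,b⟩,⟨c,d⟩⟩; rfl)

/-- if the normalized Laplacian matrix of a graph G on V × W is
separable in ℂ^{|V|} × ℂ^{|W|}, then every vertex has the same degree in G as in
the partial transpose graph. -/
theorem stmt_12 {α β : Type*} [Fintype α] [Fintype β] [DecidableEq α] [DecidableEq β]
    (G : SimpleGraph (α × β))
    (hsep : SepDensity2 ((lapMat G).trace⁻¹ • lapMat G)) :
    ∀ x, natDeg (partialTranspose G) x = natDeg G x := by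
  classical
  obtain ⟨k, c, ρ, σ, hc0, hc1, hds, heq⟩ := hsep
  by_cases htr : (lapMat G).trace = 0
  · -- the normalized Laplacian is then 0, but a separable sum has trace 1
    exfalso
    have h0 : ((lapMat G).trace⁻¹ • lapMat G).trace = 0 := by
      rw [htr, _root_.inv_zero, zero_smul, Matrix.trace_zero]
    rw [heq, Matrix.trace_sum] at h0
    have h1 : ∀ t : Fin k, ((c t : ℂ) • (ρ t ⊗ₖ σ t)).trace = (c t : ℂ) := by
      intro t
      rw [Matrix.trace_smul, Matrix.trace_kronecker, (hds t).1.2, (hds t).2.2]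
      simp
    rw [Finset.sum_congr rfl fun t _ => h1 t] at h0
    have : ((1 : ℝ) : ℂ) = 0 := by
      rw [← hc1]; push_cast; exact h0
    simp at this
  · intro x
    set τ : ℂ := (lapMat G).trace⁻¹ with hτ
    set M : Matrix (α × β) (α × β) ℂ :=
      Matrix.of (fun p q => τ * lapMat G (q.1, p.2) (p.1, q.2)) with hMdef
    have hM : M = ∑ t, (c t : ℂ) • ((ρ t)ᵀ ⊗ₖ σ t) := by
      ext p q
      have he : (τ • lapMat G) (q.1, p.2) (p.1, q.2)
          = (∑ t, (c t : ℂ) • (ρ t ⊗ₖ σ t)) (q.1, p.2) (p.1, q.2) := by rw [heq]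
      simp only [Matrix.smul_apply, Matrix.sum_apply, Matrix.kroneckerMap_apply,
        smul_eq_mul] at he ⊢
      simp only [hMdef, Matrix.of_apply, Matrix.sum_apply, Matrix.smul_apply,
        Matrix.kroneckerMap_apply, Matrix.transpose_apply, smul_eq_mul]
      exact he
    have hPSD : M.PosSemidef := by
      rw [hM]
      refine Finset.sum_induction _ _ (fun a b ha hb => ha.add hb) Matrix.PosSemidef.zero ?_
      intro t _
      exact psd_smul (hc0 t) (psd_kron ((hds t).1.1.transpose) ((hds t).2.1))
    -- total sum of entries of M is zero
    have key : ∑ p : α × β, ∑ q : α × β, lapMat G (q.1, p.2) (p.1, q.2) = 0 := by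
      have h := Fintype.sum_equiv (ptInvol α β)
          (fun z : (α × β) × (α × β) => lapMat G (z.2.1, z.1.2) (z.1.1, z.2.2))
          (fun z => lapMat G z.1 z.2) (fun z => rfl)
      have h2 : ∑ z : (α × β) × (α × β), lapMat G z.1 z.2 = 0 := by
        rw [Fintype.sum_prod_type (f := fun z : (α × β) × (α × β) => lapMat G z.1 z.2)]
        simp only
        rw [Finset.sum_congr rfl fun p _ => lap_row_sum G p, Finset.sum_const, smul_zero]
      calc ∑ p : α × β, ∑ q : α × β, lapMat G (q.1, p.2) (p.1, q.2)
          = ∑ z : (α × β) × (α × β), lapMat G (z.2.1, z.1.2) (z.1.1, z.2.2) :=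
            (Fintype.sum_prod_type (f := fun z : (α × β) × (α × β) =>
              lapMat G (z.2.1, z.1.2) (z.1.1, z.2.2))).symm
        _ = 0 := h.trans h2
    have htot : star (1 : (α × β) → ℂ) ⬝ᵥ M *ᵥ (1 : (α × β) → ℂ) = 0 := by
      simp only [dotProduct, Matrix.mulVec, Pi.star_apply, Pi.one_apply, star_one,
        one_mul, mul_one, hMdef, Matrix.of_apply]
      simp only [← Finset.mul_sum]
      rw [key, mul_zero]
    have hzero : M *ᵥ (1 : (α × β) → ℂ) = 0 :=
      (hPSD.dotProduct_mulVec_zero_iff _).mp htot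
    have hx := congrFun hzero x
    simp only [Matrix.mulVec, dotProduct, Pi.one_apply, mul_one, Pi.zero_apply,
      hMdef, Matrix.of_apply] at hx
    rw [← Finset.mul_sum, lap_pt_row_sum] at hx
    have hτne : τ ≠ 0 := inv_ne_zero htr
    have hdiff : (natDeg G x : ℂ) - (natDeg (partialTranspose G) x : ℂ) = 0 :=
      (mul_eq_zero.mp hx).resolve_left hτne
    have : (natDeg (partialTranspose G) x : ℂ) = (natDeg G x : ℂ) := by
      linear_combination -hdiff
    exact_mod_cast this
end

section
/- Let n = p_1 p_2 > 4 with 2 ≤ p_1 ≤ p_2, and let 0 < r ≤ n/2. Then there exists a vertex labeling of K_{r,n-r} by {1,…,p_1}×{1,…,p_2} under which some vertex has different degrees in K_{r,n-r} and in the partial transpose graph (hence the normalized Laplacian is entangled in C^{p_1} × C^{p_2} for that labeling). -/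
open Matrix Finset
open scoped Kronecker Classical ComplexOrder

/-- The complete bipartite graph K_{r,n-r} on Fin n, with parts {i : i < r} and
{i : r ≤ i}. -/
def Kbip (n r : ℕ) : SimpleGraph (Fin n) :=
  SimpleGraph.fromRel fun i j => i.val < r ∧ ¬ j.val < r

lemma natDeg_eq_card {γ : Type*} [Fintype γ] (G : SimpleGraph γ) (x : γ) (s : Finset γ)
    (h : ∀ y, G.Adj x y ↔ y ∈ s) : natDeg G x = s.card := by
  rw [natDeg]
  congr 1
  ext y
  simp [Finset.mem_filter, h]

lemma kbip_adj {n r : ℕ} (i j : Fin n) :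
    (Kbip n r).Adj i j ↔ ¬(i.val < r ↔ j.val < r) := by
  rw [Kbip, SimpleGraph.fromRel_adj]
  constructor
  · rintro ⟨_, h⟩; tauto
  · intro h
    refine ⟨fun hij => h (by rw [hij]), by tauto⟩

lemma exists_good_equiv (n r : ℕ) (γ : Type*) [Fintype γ] (hc : Fintype.card γ = n)
    (T : Finset γ) (hT : T.card = r) (hrn : r ≤ n) :
    ∃ f : Fin n ≃ γ, ∀ i : Fin n, i.val < r ↔ f i ∈ T := by
  have h1 : Fintype.card {x : γ // x ∈ T} = r := by simp [hT]
  have h2 : Fintype.card {x : γ // ¬ x ∈ T} = n - r := by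
    rw [Fintype.card_subtype_compl, h1, hc]
  have hsum : r + (n - r) = n := by omega
  let eT : Fin r ≃ {x : γ // x ∈ T} := (Fintype.equivFinOfCardEq h1).symm
  let eTc : Fin (n - r) ≃ {x : γ // ¬ x ∈ T} := (Fintype.equivFinOfCardEq h2).symm
  refine ⟨((finCongr hsum).symm.trans finSumFinEquiv.symm).trans
    ((Equiv.sumCongr eT eTc).trans (Equiv.sumCompl (· ∈ T))), fun i => ?_⟩
  simp only [Equiv.trans_apply]
  rcases h : finSumFinEquiv.symm ((finCongr hsum).symm i) with a | a
  · have := congrArg finSumFinEquiv h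
    rw [Equiv.apply_symm_apply, finSumFinEquiv_apply_left] at this
    have hv : i.val = (a : ℕ) := by
      have := congrArg Fin.val this
      simpa using this
    simp only [h, Equiv.sumCongr_apply, Sum.map_inl, Equiv.sumCompl_apply_inl]
    have hmem := (eT a).2
    exact ⟨fun _ => hmem, fun _ => by rw [hv]; exact a.isLt⟩
  · have := congrArg finSumFinEquiv h
    rw [Equiv.apply_symm_apply, finSumFinEquiv_apply_right] at this
    have hv : i.val = r + (a : ℕ) := by
      have := congrArg Fin.val this
      simpa using this
    simp only [h, Equiv.sumCongr_apply, Sum.map_inr, Equiv.sumCompl_apply_inr]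
    have hnT := (eTc a).2
    exact ⟨fun hlt => by omega, fun hmem => absurd hmem hnT⟩

lemma kbip_map_adj {n r : ℕ} {γ : Type*} [Fintype γ] (f : Fin n ≃ γ) (T : Finset γ)
    (hf : ∀ i : Fin n, i.val < r ↔ f i ∈ T) (a b : γ) :
    ((Kbip n r).map f.toEmbedding).Adj a b ↔ ¬(a ∈ T ↔ b ∈ T) := by
  simp only [SimpleGraph.map_adj, Equiv.coe_toEmbedding, kbip_adj]
  constructor
  · rintro ⟨_, i, j, h, rfl, rfl⟩
    rwa [kbip_adj, hf i, hf j] at h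
  · intro h
    refine ⟨fun hab => h (by rw [hab]), f.symm a, f.symm b, ?_, f.apply_symm_apply a, f.apply_symm_apply b⟩
    rwa [kbip_adj, hf (f.symm a), hf (f.symm b), f.apply_symm_apply, f.apply_symm_apply]

/-- for n = p₁p₂ > 4 with 2 ≤ p₁ ≤ p₂ and 0 < r ≤ n/2, there exists a
vertex labeling of K_{r,n-r} by {1,…,p₁} × {1,…,p₂} under which some vertex has
different degrees in K_{r,n-r} and in its partial transpose graph (hence the
normalized Laplacian is entangled in ℂ^{p₁} × ℂ^{p₂} for that labeling). -/
theorem stmt_15 (p₁ p₂ r : ℕ) (hp₁ : 2 ≤ p₁) (hp₁₂ : p₁ ≤ p₂) (hn : 4 < p₁ * p₂)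
    (hr₀ : 0 < r) (hr : 2 * r ≤ p₁ * p₂) :
    ∃ f : Fin (p₁ * p₂) ≃ Fin p₁ × Fin p₂,
      ∃ x, natDeg (partialTranspose ((Kbip (p₁ * p₂) r).map f.toEmbedding)) x ≠
        natDeg ((Kbip (p₁ * p₂) r).map f.toEmbedding) x := by
  have hp₁0 : 0 < p₁ := by omega
  have hp₂0 : 0 < p₂ := by omega
  have hcard : Fintype.card (Fin p₁ × Fin p₂) = p₁ * p₂ := by simp
  have hrn : r ≤ p₁ * p₂ := by omega
  by_cases hcase : r ≤ (p₁ - 1) * (p₂ - 1)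
  · -- main case: put the r labels < r away from row 0 and column 0
    set S : Finset (Fin p₁ × Fin p₂) :=
      ((univ : Finset (Fin p₁)).erase ⟨0, hp₁0⟩) ×ˢ
        ((univ : Finset (Fin p₂)).erase ⟨0, hp₂0⟩) with hS
    have hScard : S.card = (p₁ - 1) * (p₂ - 1) := by
      rw [hS, Finset.card_product, Finset.card_erase_of_mem (mem_univ _),
        Finset.card_erase_of_mem (mem_univ _)]
      simp
    obtain ⟨T, hTS, hTcard⟩ := Finset.exists_subset_card_eq (s := S) (n := r) (by omega)
    obtain ⟨f, hf⟩ := exists_good_equiv (p₁ * p₂) r _ hcard T hTcard hrn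
    refine ⟨f, (⟨0, hp₁0⟩, ⟨0, hp₂0⟩), ?_⟩
    have hrow : ∀ y : Fin p₂, ((⟨0, hp₁0⟩ : Fin p₁), y) ∉ T := by
      intro y hy
      have := hTS hy
      rw [hS, Finset.mem_product] at this
      exact (Finset.mem_erase.mp this.1).1 rfl
    have hcol : ∀ w : Fin p₁, (w, (⟨0, hp₂0⟩ : Fin p₂)) ∉ T := by
      intro w hw
      have := hTS hw
      rw [hS, Finset.mem_product] at this
      exact (Finset.mem_erase.mp this.2).1 rfl
    have hPT : natDeg (partialTranspose ((Kbip (p₁ * p₂) r).map f.toEmbedding))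
        (⟨0, hp₁0⟩, ⟨0, hp₂0⟩) = 0 := by
      rw [natDeg, Finset.card_eq_zero, Finset.filter_eq_empty_iff]
      intro y _
      show ¬ ((Kbip (p₁ * p₂) r).map f.toEmbedding).Adj _ _
      rw [kbip_map_adj f T hf]
      intro h
      exact h ⟨fun h1 => absurd h1 (hrow y.2), fun h2 => absurd h2 (hcol y.1)⟩
    have hT_ne : T.Nonempty := by
      rw [← Finset.card_pos, hTcard]; exact hr₀
    obtain ⟨t, ht⟩ := hT_ne
    have hG : natDeg ((Kbip (p₁ * p₂) r).map f.toEmbedding) (⟨0, hp₁0⟩, ⟨0, hp₂0⟩) = r := by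
      rw [natDeg_eq_card _ _ T ?hadj, hTcard]
      case hadj =>
        intro y
        rw [kbip_map_adj f T hf]
        constructor
        · intro h
          by_contra hy
          exact h ⟨fun h1 => absurd h1 (hrow _), fun h2 => absurd h2 hy⟩
        · intro hy hiff
          exact hrow (⟨0, hp₂0⟩ : Fin p₂) (hiff.mpr hy)
    rw [hPT, hG]
    omega
  · -- exceptional case: p₁ = 2, r = p₂
    push_neg at hcase
    have key : p₁ = 2 ∧ r = p₂ := by
      obtain ⟨a, ha⟩ : ∃ a, p₁ = a + 2 := ⟨p₁ - 2, by omega⟩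
      obtain ⟨b, hb⟩ : ∃ b, p₂ = b + 2 := ⟨p₂ - 2, by omega⟩
      subst ha hb
      have h1 : (a + 1) * (b + 1) < r := by
        have e1 : a + 2 - 1 = a + 1 := by omega
        have e2 : b + 2 - 1 = b + 1 := by omega
        rwa [e1, e2] at hcase
      have hab' : a * b ≤ 0 := by nlinarith
      have ha0 : a = 0 := by
        rcases Nat.mul_eq_zero.mp (by omega : a * b = 0) with h | h
        · exact h
        · omega
      subst ha0
      refine ⟨rfl, ?_⟩
      nlinarith
    obtain ⟨hp2, hr2⟩ := key
    subst hp2 hr2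
    -- now the goal is about Fin 2 × Fin r with 2 * r vertices, parts of size r each
    have hr3 : 3 ≤ r := by omega
    have hfin2 : ∀ w : Fin 2, w = 0 ∨ w = 1 := by decide
    have h01 : (0 : Fin 2) ≠ 1 := by decide
    set vlast : Fin r := ⟨r - 1, by omega⟩ with hvlast
    set v0 : Fin r := ⟨0, hr₀⟩ with hv0
    set T : Finset (Fin 2 × Fin r) :=
      ((univ.erase vlast).image fun v => ((0 : Fin 2), v)) ∪ {((1 : Fin 2), v0)} with hT
    have hinj : Function.Injective fun v : Fin r => ((0 : Fin 2), v) :=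
      fun x y h => congrArg Prod.snd h
    have hTcard : T.card = r := by
      rw [hT, Finset.card_union_of_disjoint, Finset.card_image_of_injective _ hinj,
        Finset.card_erase_of_mem (mem_univ _), Finset.card_singleton]
      · simp only [Finset.card_univ, Fintype.card_fin]
        omega
      · rw [Finset.disjoint_left]
        rintro x hx hx'
        rw [Finset.mem_image] at hx
        rw [Finset.mem_singleton] at hx'
        obtain ⟨v, _, rfl⟩ := hx
        exact h01 (congrArg Prod.fst hx')
    have hmemT : ∀ x : Fin 2 × Fin r,
        x ∈ T ↔ (x.1 = 0 ∧ x.2 ≠ vlast) ∨ x = ((1 : Fin 2), v0) := by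
      intro x
      rw [hT, Finset.mem_union, Finset.mem_image, Finset.mem_singleton]
      constructor
      · rintro (⟨v, hv, rfl⟩ | h)
        · exact Or.inl ⟨rfl, (Finset.mem_erase.mp hv).1⟩
        · exact Or.inr h
      · rintro (⟨h1, h2⟩ | h)
        · exact Or.inl ⟨x.2, Finset.mem_erase.mpr ⟨h2, mem_univ _⟩, by rw [← h1]⟩
        · exact Or.inr h
    have hv0ne : v0 ≠ vlast := by
      rw [hv0, hvlast]
      intro h
      have := congrArg Fin.val h
      simp only at this
      omega
    have hcol : ∀ w : Fin 2, (w, v0) ∈ T := by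
      intro w
      rw [hmemT]
      rcases hfin2 w with rfl | rfl
      · exact Or.inl ⟨rfl, hv0ne⟩
      · exact Or.inr rfl
    have hx0 : ((0 : Fin 2), v0) ∈ T := hcol 0
    obtain ⟨f, hf⟩ := exists_good_equiv (2 * r) r _ hcard T hTcard hrn
    refine ⟨f, ((0 : Fin 2), v0), ?_⟩
    have hG : natDeg ((Kbip (2 * r) r).map f.toEmbedding) ((0 : Fin 2), v0) = r := by
      rw [natDeg_eq_card _ _ (univ \ T) ?hadj]
      case hadj =>
        intro y
        rw [kbip_map_adj f T hf, Finset.mem_sdiff]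
        constructor
        · intro h
          exact ⟨mem_univ _, fun hy => h ⟨fun _ => hy, fun _ => hx0⟩⟩
        · rintro ⟨_, hy⟩
          exact fun hiff => hy (hiff.mp hx0)
      rw [Finset.card_sdiff_of_subset (Finset.subset_univ _), hTcard, Finset.card_univ, hcard]
      omega
    have hPT : natDeg (partialTranspose ((Kbip (2 * r) r).map f.toEmbedding))
        ((0 : Fin 2), v0) = 2 := by
      rw [natDeg_eq_card _ _ ({((0 : Fin 2), vlast), ((1 : Fin 2), vlast)}) ?hadj]
      case hadj =>
        intro y
        have hadj : (partialTranspose ((Kbip (2 * r) r).map f.toEmbedding)).Adj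
            ((0 : Fin 2), v0) y
            ↔ ¬((((0 : Fin 2), y.2) : Fin 2 × Fin r) ∈ T ↔
                ((y.1, v0) : Fin 2 × Fin r) ∈ T) :=
          kbip_map_adj f T hf ((0 : Fin 2), y.2) (y.1, v0)
        rw [hadj, Finset.mem_insert, Finset.mem_singleton]
        have hc : ((y.1, v0) : Fin 2 × Fin r) ∈ T := hcol y.1
        have hrowmem : (((0 : Fin 2), y.2) : Fin 2 × Fin r) ∈ T ↔ y.2 ≠ vlast := by
          rw [hmemT]
          constructor
          · rintro (⟨_, h⟩ | h)
            · exact h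
            · exact absurd (congrArg Prod.fst h) h01
          · intro h; exact Or.inl ⟨rfl, h⟩
        constructor
        · intro h
          have hy2 : y.2 = vlast := by
            by_contra hne
            exact h ⟨fun _ => hc, fun _ => hrowmem.mpr hne⟩
          rcases hfin2 y.1 with h1 | h1
          · exact Or.inl (Prod.ext h1 hy2)
          · exact Or.inr (Prod.ext h1 hy2)
        · rintro (rfl | rfl) <;>
            exact fun hiff => (hrowmem.mp (hiff.mpr hc)) rfl
      rw [Finset.card_insert_of_notMem, Finset.card_singleton]
      rw [Finset.mem_singleton]
      exact fun h => h01 (congrArg Prod.fst h)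
    rw [hPT, hG]
    omega
end
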